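/- Distribution function of the stationary measure supported on a ray (formulas (4.4)/(4.8)): Let n ∈ ℕ, r > 0, σ ≠ 0, α := 2r/σ², and let P ∈ (Fin n → ℝ) be nonzero with Pᵢ ≥ 0 for all i. Let μ^σ_P be the pushforward of the Gamma distribution with shape α and rate α under the map s ↦ s•P. Then for every z ∈ (Fin n → ℝ) with zᵢ ≥ 0 for all i, μ^σ_P({y : ∀ i, yᵢ ≤ zᵢ}) = ∫₀^{m} p^σ(s) ds, where m := min{zᵢ/Pᵢ : Pᵢ ≠ 0} and p^σ(s) = α^α/Γ(α)·s^{α−1}·exp(−α·s) is the Gamma(α, α) density. -/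

import Mathlib

open Real Filter Topology MeasureTheory ProbabilityTheory intervalIntegral

/-- **Distribution function of the stationary measure supported on a ray**
(formulas (4.4)/(4.8)). Let `μ^σ_P` be the pushforward of the Gamma(α, α)
distribution (`α = 2r/σ²`) under `s ↦ s • P`, where `P ≠ 0` has nonnegative
coordinates. Then for every nonnegative `z`,
`μ^σ_P {y | ∀ i, yᵢ ≤ zᵢ} = ∫₀^m p^σ(s) ds` with
`m = min {zᵢ/Pᵢ : Pᵢ ≠ 0}` and `p^σ(s) = α^α/Γ(α) s^{α-1} e^{-α s}`. -/
theorem stationary_measure_ray_distribution_function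
    (n : ℕ) (r σ : ℝ) (hr : 0 < r) (hσ : σ ≠ 0)
    (P : Fin n → ℝ) (hP : P ≠ 0) (hPnn : ∀ i, 0 ≤ P i)
    (z : Fin n → ℝ) (hz : ∀ i, 0 ≤ z i) :
    Measure.map (fun s : ℝ => s • P) (gammaMeasure (2 * r / σ ^ 2) (2 * r / σ ^ 2))
        {y : Fin n → ℝ | ∀ i, y i ≤ z i}
      = ENNReal.ofReal
          (∫ s in (0:ℝ)..(sInf {x : ℝ | ∃ i, P i ≠ 0 ∧ x = z i / P i}),
            (2 * r / σ ^ 2) ^ (2 * r / σ ^ 2) / Real.Gamma (2 * r / σ ^ 2) *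
              s ^ (2 * r / σ ^ 2 - 1) * Real.exp (-(2 * r / σ ^ 2 * s))) := by
  set α : ℝ := 2 * r / σ ^ 2 with hα_def
  have hα : 0 < α := by positivity
  set S : Set ℝ := {x : ℝ | ∃ i, P i ≠ 0 ∧ x = z i / P i} with hS_def
  set m : ℝ := sInf S with hm_def
  set f : ℝ → ℝ := fun s => α ^ α / Real.Gamma α * s ^ (α - 1) * Real.exp (-(α * s))
    with hf_def
  -- S is a finite nonempty set of nonnegative numbers
  have hSfin : S.Finite := by
    have : S ⊆ (fun i => z i / P i) '' Set.univ := by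
      rintro x ⟨i, hi, rfl⟩; exact ⟨i, trivial, rfl⟩
    exact Set.Finite.subset (Set.finite_univ.image _) this
  have hSne : S.Nonempty := by
    obtain ⟨i, hi⟩ := Function.ne_iff.mp hP
    exact ⟨z i / P i, i, hi, rfl⟩
  have hSbdd : BddBelow S := hSfin.bddBelow
  have hmem : m ∈ S := hSne.csInf_mem hSfin
  have hPpos : ∀ i, P i ≠ 0 → 0 < P i := fun i hi => (hPnn i).lt_of_ne (Ne.symm hi)
  have hm0 : 0 ≤ m := by
    obtain ⟨i, hi, hmi⟩ := hmem
    rw [hmi]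
    exact div_nonneg (hz i) (hPnn i)
  -- the preimage of the orthant under s ↦ s • P is Iic m
  have hpre : (fun s : ℝ => s • P) ⁻¹' {y : Fin n → ℝ | ∀ i, y i ≤ z i} = Set.Iic m := by
    ext s
    simp only [Set.mem_preimage, Set.mem_setOf_eq, Pi.smul_apply, smul_eq_mul, Set.mem_Iic]
    constructor
    · intro h
      refine le_csInf hSne ?_
      rintro x ⟨i, hi, rfl⟩
      exact (le_div_iff₀ (hPpos i hi)).mpr (h i)
    · intro hs i
      rcases eq_or_ne (P i) 0 with h0 | h0
      · simpa [h0] using hz i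
      · have hmle : m ≤ z i / P i := csInf_le hSbdd ⟨i, h0, rfl⟩
        exact (le_div_iff₀ (hPpos i h0)).mp (hs.trans hmle) 
  have hmeas_smul : Measurable fun s : ℝ => s • P := measurable_id.smul_const P
  have hsetmeas : MeasurableSet {y : Fin n → ℝ | ∀ i, y i ≤ z i} := by
    have : {y : Fin n → ℝ | ∀ i, y i ≤ z i} = ⋂ i, {y | y i ≤ z i} := by
      ext y; simp
    rw [this]
    exact MeasurableSet.iInter fun i =>
      measurableSet_le (measurable_pi_apply i) measurable_const
  rw [Measure.map_apply hmeas_smul hsetmeas, hpre, gammaMeasure,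
    withDensity_apply _ measurableSet_Iic]
  -- split Iic m into Iio 0 and Icc 0 m
  have hsplit : Set.Iic m = Set.Iio 0 ∪ Set.Icc 0 m := by
    ext x
    simp only [Set.mem_Iic, Set.mem_union, Set.mem_Iio, Set.mem_Icc]
    constructor
    · intro hx
      rcases lt_or_ge x 0 with h | h
      · exact Or.inl h
      · exact Or.inr ⟨h, hx⟩
    · rintro (h | ⟨_, h⟩)
      · exact h.le.trans hm0
      · exact h
  have hdisj : Disjoint (Set.Iio (0:ℝ)) (Set.Icc 0 m) := by
    rw [Set.disjoint_left]
    rintro x hx ⟨hx0, _⟩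
    exact absurd hx0 (not_le.mpr hx)
  rw [hsplit, lintegral_union measurableSet_Icc hdisj]
  have hzero : ∫⁻ s in Set.Iio (0:ℝ), gammaPDF α α s = 0 := by
    rw [setLIntegral_congr_fun measurableSet_Iio
      (fun ⦃x⦄ (hx : x ∈ Set.Iio 0) => gammaPDF_of_neg hx)]
    simp
  rw [hzero, zero_add]
  have hcongr : ∫⁻ s in Set.Icc (0:ℝ) m, gammaPDF α α s
      = ∫⁻ s in Set.Icc (0:ℝ) m, ENNReal.ofReal (f s) := by
    refine setLIntegral_congr_fun measurableSet_Icc (fun ⦃x⦄ hx => ?_)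
    rw [gammaPDF_of_nonneg hx.1]
  rw [hcongr]
  -- measurability and nonnegativity of f
  have hf_meas : Measurable f := by
    apply Measurable.mul
    · exact ((measurable_id'.pow_const _).const_mul _)
    · exact (measurable_const.mul measurable_id).neg.exp
  have hf_nn : ∀ x ∈ Set.Icc (0:ℝ) m, 0 ≤ f x := by
    intro x hx
    have h1 : (0:ℝ) ≤ α ^ α / Real.Gamma α := by
      apply div_nonneg (Real.rpow_nonneg hα.le _) (Real.Gamma_nonneg_of_nonneg hα.le)
    exact mul_nonneg (mul_nonneg h1 (Real.rpow_nonneg hx.1 _)) (Real.exp_nonneg _)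
  have hf_nn_ae : 0 ≤ᵐ[volume.restrict (Set.Icc (0:ℝ) m)] f :=
    (ae_restrict_iff' measurableSet_Icc).mpr (ae_of_all _ hf_nn)
  -- integrability of f on Icc 0 m
  have hf_int : Integrable f (volume.restrict (Set.Icc (0:ℝ) m)) := by
    constructor
    · exact hf_meas.aestronglyMeasurable
    · rw [hasFiniteIntegral_iff_ofReal hf_nn_ae]
      calc ∫⁻ s in Set.Icc (0:ℝ) m, ENNReal.ofReal (f s)
          = ∫⁻ s in Set.Icc (0:ℝ) m, gammaPDF α α s := hcongr.symm
        _ ≤ ∫⁻ s, gammaPDF α α s := setLIntegral_le_lintegral _ _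
        _ = 1 := lintegral_gammaPDF_eq_one hα hα
        _ < ⊤ := by simp
  rw [← ofReal_integral_eq_lintegral_ofReal hf_int hf_nn_ae,
    MeasureTheory.integral_Icc_eq_integral_Ioc,
    ← intervalIntegral.integral_of_le hm0]
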